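/- Vertex representation of a two-piece lift: for the marginal support [p^0, p^2] with one breakpoint p^1, every point (ζ, L̄^1(ζ), L̄^2(ζ), L̂^1(ζ)) with ζ ∈ [p^0, p^2] \ {p^1} lies in the convex hull of the four lifted vertices corresponding to ζ ∈ {p^0, p^1⁻, p^1, p^2}, namely (p^0, p^0, 0, 0), (p^1, p^1, 0, 0), (p^1, p^1, 0, 1), and (p^2, p^1, p^2 − p^1, 1). -/

import Mathlib

/-- vertex representation of the two-piece lift: for
`ζ ∈ [p⁰, p²] \ {p¹}`, the lifted point `(ζ, L̄¹(ζ), L̄²(ζ), L̂¹(ζ))` is a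
convex combination of the four lifted vertices
`(p⁰,p⁰,0,0), (p¹,p¹,0,0), (p¹,p¹,0,1), (p²,p¹,p²−p¹,1)`. -/
theorem stmt16
    (p0 p1 p2 : ℝ) (hp0 : 0 ≤ p0) (h01 : p0 < p1) (h12 : p1 < p2)
    (L1 L2 Lhat : ℝ → ℝ)
    (hL1 : ∀ ζ, L1 ζ = min ζ p1)
    (hL2 : ∀ ζ, L2 ζ = max (min ζ p2 - p1) 0)
    (hLhat : ∀ ζ, Lhat ζ = if p1 ≤ ζ then 1 else 0) :
    ∀ ζ ∈ Set.Icc p0 p2, ζ ≠ p1 →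
      ∃ l : Fin 4 → ℝ, (∀ i, 0 ≤ l i) ∧ (∑ i, l i = 1) ∧
        ((ζ, L1 ζ, L2 ζ, Lhat ζ) : ℝ × ℝ × ℝ × ℝ) =
          l 0 • ((p0, p0, 0, 0) : ℝ × ℝ × ℝ × ℝ) +
          l 1 • ((p1, p1, 0, 0) : ℝ × ℝ × ℝ × ℝ) +
          l 2 • ((p1, p1, 0, 1) : ℝ × ℝ × ℝ × ℝ) +
          l 3 • ((p2, p1, p2 - p1, 1) : ℝ × ℝ × ℝ × ℝ) := by
  rintro ζ ⟨hζ0, hζ2⟩ hne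
  rcases lt_or_gt_of_ne hne with hlt | hgt
  · refine ⟨![(p1 - ζ)/(p1 - p0), (ζ - p0)/(p1 - p0), 0, 0], ?_, ?_, ?_⟩
    · intro i
      fin_cases i <;> simp <;> exact div_nonneg (by linarith) (by linarith)
    · have h : p1 - p0 ≠ 0 := by linarith
      simp [Fin.sum_univ_four]
      field_simp
      ring
    · have h : p1 - p0 ≠ 0 := by linarith
      simp only [hL1, hL2, hLhat, Prod.mk.injEq, Prod.smul_mk, smul_eq_mul,
        Prod.mk_add_mk, Matrix.cons_val_zero, Matrix.cons_val_one, Matrix.head_cons,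
        Matrix.cons_val_two, Matrix.tail_cons, Matrix.cons_val_three]
      rw [min_eq_left hlt.le, min_eq_left (le_of_lt (lt_trans hlt h12)),
        max_eq_right (by linarith : ζ - p1 ≤ (0:ℝ)), if_neg (not_le.2 hlt)]
      refine ⟨?_, ?_, ?_, ?_⟩ <;> field_simp <;> ring
  · refine ⟨![0, 0, (p2 - ζ)/(p2 - p1), (ζ - p1)/(p2 - p1)], ?_, ?_, ?_⟩
    · intro i
      fin_cases i <;> simp <;> exact div_nonneg (by linarith) (by linarith)
    · have h : p2 - p1 ≠ 0 := by linarith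
      simp [Fin.sum_univ_four]
      field_simp
      ring
    · have h : p2 - p1 ≠ 0 := by linarith
      simp only [hL1, hL2, hLhat, Prod.mk.injEq, Prod.smul_mk, smul_eq_mul,
        Prod.mk_add_mk, Matrix.cons_val_zero, Matrix.cons_val_one, Matrix.head_cons,
        Matrix.cons_val_two, Matrix.tail_cons, Matrix.cons_val_three]
      rw [min_eq_right hgt.le, min_eq_left hζ2,
        max_eq_left (by linarith : (0:ℝ) ≤ ζ - p1), if_pos hgt.le]
      refine ⟨?_, ?_, ?_, ?_⟩ <;> field_simp <;> ring
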